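/- Bias-correction identity at the cutoff for a possibly misspecified outcome model: Let κ := condDistrib Z W P be the regular conditional distribution of Z given W. Let μ0 : ℝ × ℝ^k → ℝ be bounded measurable with μ0(W, Z) = E[Y | σ(W, Z)] P-almost surely, let m : ℝ → ℝ be a continuous function with m(W) = E[Y | σ(W)] P-almost surely, suppose the map w ↦ ∫ μ0(w, z) dκ(w)(z) is continuous, and suppose c lies in the topological support of the law of W. Then for every bounded measurable μ† : ℝ × ℝ^k → ℝ, ∫ (μ0(c, z) − μ†(c, z)) dκ(c)(z) + ∫ μ†(c, z) dκ(c)(z) = m(c); that is, the conditional expected estimation error E[μ0(W, Z) − μ†(W, Z) | W = c] plus the conditional mean of the misspecified outcome model at the cutoff recovers E[Y | W = c]. -/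

import Mathlib

open MeasureTheory ProbabilityTheory Filter Topology

/-- **Bias-correction identity at the cutoff for a possibly misspecified outcome model.**
Setup: `(Ω, ℱ, P)` probability space, running variable `W : Ω → ℝ`, covariates
`Z : Ω → ℝ^k`, cutoff `c`, bounded measurable observed outcome `Y`.  Let
`κ := condDistrib Z W P` be the regular conditional distribution of `Z` given `W`.
If `μ0` is bounded measurable with `μ0(W, Z) = E[Y | σ(W, Z)]` a.s., `m` is continuous
with `m(W) = E[Y | σ(W)]` a.s., the map `w ↦ ∫ μ0(w, z) dκ(w)(z)` is continuous, and `c`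
lies in the topological support of the law of `W` (every neighborhood of `c` has positive
measure under `P.map W`), then for every bounded measurable `μ†`,
`∫ (μ0(c,z) − μ†(c,z)) dκ(c)(z) + ∫ μ†(c,z) dκ(c)(z) = m(c)`. -/
theorem dr_rd_bias_correction_identity
    {Ω : Type*} [MeasurableSpace Ω] (P : Measure Ω) [IsProbabilityMeasure P]
    {k : ℕ} (W : Ω → ℝ) (hW : Measurable W) (Z : Ω → (Fin k → ℝ)) (hZ : Measurable Z)
    (c : ℝ) (Y : Ω → ℝ) (hYmeas : Measurable Y) (CY : ℝ) (hYbdd : ∀ ω, |Y ω| ≤ CY)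
    (μ0 : ℝ × (Fin k → ℝ) → ℝ) (hμ0meas : Measurable μ0) (C0 : ℝ) (hμ0bdd : ∀ p, |μ0 p| ≤ C0)
    (hμ0 : (fun ω => μ0 (W ω, Z ω))
      =ᵐ[P] P[Y | MeasurableSpace.comap (fun ω => (W ω, Z ω)) inferInstance])
    (m : ℝ → ℝ) (hmcont : Continuous m)
    (hm : (fun ω => m (W ω)) =ᵐ[P] P[Y | MeasurableSpace.comap W inferInstance])
    (hcont : Continuous fun w => ∫ z, μ0 (w, z) ∂(condDistrib Z W P w))
    (hsupp : ∀ U ∈ 𝓝 c, P.map W U ≠ 0)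
    (μdag : ℝ × (Fin k → ℝ) → ℝ) (hμdagmeas : Measurable μdag)
    (Cdag : ℝ) (hμdagbdd : ∀ p, |μdag p| ≤ Cdag) :
    (∫ z, (μ0 (c, z) - μdag (c, z)) ∂(condDistrib Z W P c))
      + (∫ z, μdag (c, z) ∂(condDistrib Z W P c)) = m c := by
  set κ := condDistrib Z W P with hκ
  have hκprob : IsProbabilityMeasure (κ c) := inferInstance
  -- integrability of bounded measurable functions against κ c
  have hint0 : Integrable (fun z => μ0 (c, z)) (κ c) := by
    refine (integrable_const C0).mono' ?_ ?_
    · exact (hμ0meas.comp (measurable_const.prodMk measurable_id)).aestronglyMeasurable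
    · exact Eventually.of_forall fun z => by simpa using hμ0bdd (c, z)
  have hintdag : Integrable (fun z => μdag (c, z)) (κ c) := by
    refine (integrable_const Cdag).mono' ?_ ?_
    · exact (hμdagmeas.comp (measurable_const.prodMk measurable_id)).aestronglyMeasurable
    · exact Eventually.of_forall fun z => by simpa using hμdagbdd (c, z)
  rw [integral_sub hint0 hintdag, sub_add_cancel]
  -- Now show ∫ z, μ0 (c, z) ∂κ c = m c
  set g : ℝ → ℝ := fun w => ∫ z, μ0 (w, z) ∂(κ w) with hg
  -- Step 1: g ∘ W is a version of E[μ0(W,Z) | σ W]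
  have hWZ : Measurable fun ω => (W ω, Z ω) := hW.prodMk hZ
  have hμ0int : Integrable μ0 (P.map fun ω => (W ω, Z ω)) := by
    refine (integrable_const C0).mono' hμ0meas.aestronglyMeasurable ?_
    exact Eventually.of_forall fun p => by simpa using hμ0bdd p
  have h1 : P[fun ω => μ0 (W ω, Z ω) | MeasurableSpace.comap W inferInstance]
      =ᵐ[P] fun ω => g (W ω) :=
    condExp_prod_ae_eq_integral_condDistrib' hW hZ.aemeasurable hμ0int
  -- Step 2: tower property
  have hle : MeasurableSpace.comap W inferInstance ≤
      MeasurableSpace.comap (fun ω => (W ω, Z ω)) inferInstance := by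
    have : W = (fun p : ℝ × (Fin k → ℝ) => p.1) ∘ (fun ω => (W ω, Z ω)) := rfl
    rw [this, ← MeasurableSpace.comap_comp]
    exact MeasurableSpace.comap_mono measurable_fst.comap_le
  have h2 : P[fun ω => μ0 (W ω, Z ω) | MeasurableSpace.comap W inferInstance]
      =ᵐ[P] fun ω => m (W ω) := by
    calc P[fun ω => μ0 (W ω, Z ω) | MeasurableSpace.comap W inferInstance]
        =ᵐ[P] P[P[Y | MeasurableSpace.comap (fun ω => (W ω, Z ω)) inferInstance]
          | MeasurableSpace.comap W inferInstance] := condExp_congr_ae hμ0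
      _ =ᵐ[P] P[Y | MeasurableSpace.comap W inferInstance] :=
          condExp_condExp_of_le hle hWZ.comap_le
      _ =ᵐ[P] fun ω => m (W ω) := hm.symm
  have h3 : (fun ω => g (W ω)) =ᵐ[P] fun ω => m (W ω) := h1.symm.trans h2
  -- Step 3: transfer to P.map W
  have h4 : g =ᵐ[P.map W] m := by
    rw [Filter.EventuallyEq, ae_map_iff hW.aemeasurable]
    · exact h3
    · exact measurableSet_eq_fun hcont.measurable hmcont.measurable
  -- Step 4: continuity + support implies pointwise equality at c
  by_contra hne
  have hopen : IsOpen {w | g w ≠ m w} := by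
    have : IsClosed {w | g w = m w} := isClosed_eq hcont hmcont
    simpa [Set.compl_setOf] using this.isOpen_compl
  have hmem : {w | g w ≠ m w} ∈ 𝓝 c := hopen.mem_nhds hne
  exact hsupp _ hmem (by simpa [Filter.EventuallyEq, ae_iff] using h4)
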